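/- For every integer n ≥ 2 and every x, one has (1/(n+1))·g_n(x)·g_{n+1}'(x) − (1/n)·g_n'(x)·g_{n+1}(x) = (−x)^{n−1}. -/
import Mathlib


open Polynomial

/-- The polynomial `g_n(x) = Σ_{k=0}^{⌊n/2⌋} (n/(n−k))·binom(n−k, k)·x^k` over ℚ
for `n ≥ 1`, with `g_0 = 2`. -/
noncomputable def gP (n : ℕ) : Polynomial ℚ :=
  if n = 0 then C 2
  else ∑ k ∈ Finset.range (n / 2 + 1),
    C ((n : ℚ) / ((n : ℚ) - (k : ℚ)) * (((n - k).choose k : ℕ) : ℚ)) * X ^ k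



noncomputable def fq (n : ℕ) : Polynomial ℚ :=
  ∑ k ∈ Finset.range (n / 2 + 1), C (((n - k).choose k : ℕ) : ℚ) * X ^ k

lemma coeff_fq (n k : ℕ) : (fq n).coeff k = (((n - k).choose k : ℕ) : ℚ) := by
  rw [fq, finset_sum_coeff]
  simp only [coeff_C_mul, coeff_X_pow, mul_ite, mul_one, mul_zero]
  rw [Finset.sum_ite_eq (Finset.range (n / 2 + 1)) k]
  split
  · rfl
  · rename_i h
    rw [Finset.mem_range, not_lt] at h
    have : n - k < k := by omega
    rw [Nat.choose_eq_zero_of_lt this]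
    simp

lemma coeff_gP (n k : ℕ) (hn : n ≠ 0) :
    (gP n).coeff k = (n : ℚ) / ((n : ℚ) - (k : ℚ)) * (((n - k).choose k : ℕ) : ℚ) := by
  rw [gP, if_neg hn, finset_sum_coeff]
  simp only [coeff_C_mul, coeff_X_pow, mul_ite, mul_one, mul_zero]
  rw [Finset.sum_ite_eq (Finset.range (n / 2 + 1)) k]
  split
  · rfl
  · rename_i h
    rw [Finset.mem_range, not_lt] at h
    have : n - k < k := by omega
    rw [Nat.choose_eq_zero_of_lt this]
    simp

lemma keyNat (d j : ℕ) :
    (j + d + 2) * (d + 1).choose (j + 1) = (d + 1) * (d.choose (j + 1) + 2 * d.choose j) := by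
  have h := Nat.choose_succ_right_eq d j
  rw [Nat.choose_succ_succ]
  rcases le_or_gt j d with hd | hd
  · zify [hd] at h ⊢
    linear_combination h
  · rw [Nat.choose_eq_zero_of_lt hd, Nat.choose_eq_zero_of_lt (by omega)]
    simp

lemma gP_eq (n : ℕ) : gP (n + 2) = fq (n + 1) + C 2 * (X * fq n) := by
  ext k
  rw [coeff_gP _ _ (by omega), coeff_add, coeff_fq, coeff_C_mul]
  cases k with
  | zero =>
      rw [mul_coeff_zero, coeff_X_zero, zero_mul, mul_zero, add_zero]
      have h2 : ((n : ℚ) + 2) ≠ 0 := by positivity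
      simp only [Nat.sub_zero, Nat.choose_zero_right, Nat.cast_one, mul_one, Nat.cast_zero,
        sub_zero]
      push_cast
      rw [div_self h2]
  | succ j =>
      rw [coeff_X_mul, coeff_fq]
      rcases le_or_gt j n with hj | hj
      · have e1 : n + 2 - (j + 1) = (n - j) + 1 := by omega
        have e2 : n + 1 - (j + 1) = n - j := by omega
        rw [e1, e2]
        set d := n - j with hdef
        have hnd : (n : ℚ) = (d : ℚ) + (j : ℚ) := by
          push_cast [hdef, hj]; ring
        have hd1 : ((d : ℚ) + 1) ≠ 0 := by positivity
        have hk : ((j : ℚ) + (d : ℚ) + 2) * ((d + 1).choose (j + 1) : ℕ) =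
            ((d : ℚ) + 1) * (((d.choose (j + 1) : ℕ) : ℚ) + 2 * ((d.choose j : ℕ) : ℚ)) := by
          exact_mod_cast congrArg (Nat.cast : ℕ → ℚ) (keyNat d j)
        push_cast
        rw [hnd, show (d:ℚ) + (j:ℚ) + 2 - ((j:ℚ)+1) = (d:ℚ) + 1 by ring,
          div_mul_eq_mul_div, div_eq_iff hd1]
        linear_combination hk
      · have e1 : n + 2 - (j + 1) = 0 := by omega
        have e2 : n + 1 - (j + 1) = 0 := by omega
        have e3 : n - j = 0 := by omega
        rw [e1, e2, e3, Nat.choose_zero_succ,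
          Nat.choose_eq_zero_of_lt (by omega : 0 < j)]
        simp

lemma fqR (n : ℕ) : fq (n + 2) = fq (n + 1) + X * fq n := by
  ext k
  rw [coeff_fq, coeff_add, coeff_fq]
  cases k with
  | zero =>
      rw [mul_coeff_zero, coeff_X_zero, zero_mul, add_zero]
      simp
  | succ j =>
      rw [coeff_X_mul, coeff_fq]
      rcases le_or_gt j n with hj | hj
      · have e1 : n + 2 - (j + 1) = (n - j) + 1 := by omega
        have e2 : n + 1 - (j + 1) = n - j := by omega
        rw [e1, e2, Nat.choose_succ_succ]
        push_cast
        ring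
      · have e1 : n + 2 - (j + 1) = 0 := by omega
        have e2 : n + 1 - (j + 1) = 0 := by omega
        have e3 : n - j = 0 := by omega
        rw [e1, e2, e3, Nat.choose_zero_succ,
          Nat.choose_eq_zero_of_lt (by omega : 0 < j)]
        simp

lemma deriv_gP (n : ℕ) : derivative (gP (n + 2)) = C ((n : ℚ) + 2) * fq n := by
  ext j
  rw [coeff_derivative, coeff_C_mul, coeff_fq, coeff_gP _ _ (by omega)]
  rcases le_or_gt j n with hj | hj
  · have e1 : n + 2 - (j + 1) = (n - j) + 1 := by omega
    rw [e1]
    set d := n - j with hdef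
    have hnd : (n : ℚ) = (d : ℚ) + (j : ℚ) := by push_cast [hdef, hj]; ring
    have hd1 : ((d : ℚ) + 1) ≠ 0 := by positivity
    have hk : ((d : ℚ) + 1) * ((d.choose j : ℕ) : ℚ) =
        (((d + 1).choose (j + 1) : ℕ) : ℚ) * ((j : ℚ) + 1) := by
      exact_mod_cast congrArg (Nat.cast : ℕ → ℚ) (Nat.add_one_mul_choose_eq d j)
    push_cast
    rw [hnd, show (d:ℚ) + (j:ℚ) + 2 - ((j:ℚ)+1) = (d:ℚ) + 1 by ring,
      div_mul_eq_mul_div, div_mul_eq_mul_div, div_eq_iff hd1]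
    linear_combination (-((d : ℚ) + (j : ℚ) + 2)) * hk
  · have e1 : n + 2 - (j + 1) = 0 := by omega
    have e3 : n - j = 0 := by omega
    rw [e1, e3, Nat.choose_zero_succ, Nat.choose_eq_zero_of_lt (by omega : 0 < j)]
    simp

lemma Dlem (x : ℚ) (m : ℕ) :
    (fq (m+1)).eval x ^ 2 - (fq m).eval x * (fq (m+2)).eval x = (-x) ^ (m+1) := by
  induction m with
  | zero =>
      norm_num [fq, Finset.sum_range_succ]
  | succ m ih =>
      have e3 : (fq (m+1+2)).eval x = (fq (m+2)).eval x + x * (fq (m+1)).eval x := by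
        rw [fqR]; simp
      have e2 : (fq (m+2)).eval x = (fq (m+1)).eval x + x * (fq m).eval x := by
        rw [fqR]; simp
      rw [show m+1+1 = m+2 from rfl, e3, e2]
      rw [e2] at ih
      rw [pow_succ]
      linear_combination (-x) * ih

theorem g_wronskian (n : ℕ) (hn : 2 ≤ n) (x : ℚ) :
    (1 / ((n : ℚ) + 1)) * (gP n).eval x * (derivative (gP (n + 1))).eval x
      - (1 / (n : ℚ)) * (derivative (gP n)).eval x * (gP (n + 1)).eval x
      = (-x) ^ (n - 1) := by
  obtain ⟨m, rfl⟩ : ∃ m, n = m + 2 := ⟨n - 2, by omega⟩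
  have hg1 : (gP (m+2)).eval x = (fq (m+1)).eval x + 2 * (x * (fq m).eval x) := by
    rw [gP_eq]; simp
  have hg2 : (gP (m+2+1)).eval x = (fq (m+2)).eval x + 2 * (x * (fq (m+1)).eval x) := by
    rw [show m+2+1 = m+1+2 by ring, gP_eq]; simp
  have hd1 : (derivative (gP (m+2))).eval x = ((m:ℚ)+2) * (fq m).eval x := by
    rw [deriv_gP]; simp
  have hd2 : (derivative (gP (m+2+1))).eval x = ((m:ℚ)+3) * (fq (m+1)).eval x := by
    rw [show m+2+1 = m+1+2 by ring, deriv_gP, eval_mul, eval_C]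
    push_cast
    ring
  have hc : (fq (m+2)).eval x = (fq (m+1)).eval x + x * (fq m).eval x := by
    rw [fqR]; simp
  have hD := Dlem x m
  rw [hc] at hD
  have h2 : ((m:ℚ)+2) ≠ 0 := by positivity
  have h3 : ((m:ℚ)+3) ≠ 0 := by positivity
  rw [hg1, hg2, hd1, hd2, hc]
  rw [show m + 2 - 1 = m + 1 from rfl]
  push_cast
  field_simp
  linear_combination ((m:ℚ)+3) * hD
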